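/- Let (T0, T̃0) be a joint pair of abstract Friedrichs operators on a complex Hilbert space H and let M ∈ L(W;W') satisfy (M)-boundary conditions. Then the subspace V := ker(D − M) satisfies (V)-boundary conditions, and V^[⊥] = ker(D + M*). -/

import Mathlib

open scoped InnerProductSpace
open Filter Topology LinearPMap

noncomputable section

variable {H : Type*} [NormedAddCommGroup H] [InnerProductSpace ℂ H] [CompleteSpace H]

/-- The inner product used in the paper (antilinear in the **second** entry):
`pInner x y = ⟪y, x⟫` in Mathlib's convention. -/
def pInner {H : Type*} [NormedAddCommGroup H] [InnerProductSpace ℂ H] (x y : H) : ℂ :=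
  ⟪y, x⟫_ℂ

/-- A pair of densely defined operators with common domain satisfying conditions (T1) and (T2). -/
structure IsDualPairT12 (T0 T0t : H →ₗ.[ℂ] H) (lam : ℝ) : Prop where
  dom_eq : T0.domain = T0t.domain
  dense' : Dense (T0.domain : Set H)
  sym : ∀ (φ : T0.domain) (ψ : T0t.domain), pInner (T0 φ) (ψ : H) = pInner (φ : H) (T0t ψ)
  lam_pos : 0 < lam
  bound : ∀ (x : H) (hx : x ∈ T0.domain),
    ‖T0 ⟨x, hx⟩ + T0t ⟨x, dom_eq.le hx⟩‖ ≤ 2 * lam * ‖x‖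

/-- A joint pair of abstract Friedrichs operators: (T1), (T2) and (T3). -/
structure IsFriedrichsPair (T0 T0t : H →ₗ.[ℂ] H) (lam mu : ℝ)
    extends IsDualPairT12 T0 T0t lam : Prop where
  mu_pos : 0 < mu
  coercive : ∀ (x : H) (hx : x ∈ T0.domain),
    2 * mu * ‖x‖ ^ 2 ≤ (pInner (T0 ⟨x, hx⟩ + T0t ⟨x, dom_eq.le hx⟩) x).re

/-- The boundary form `[u|v] := ⟨T₁u , v⟩ − ⟨u , T̃₁v⟩` on the graph space
`W := dom T₁ = dom (T̃₀)*`.  The hypothesis `hW` expresses the fact `dom T₁ = dom T̃₁`. -/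
def bform (T0 T0t : H →ₗ.[ℂ] H) (hW : T0t.adjoint.domain = T0.adjoint.domain)
    (u v : T0t.adjoint.domain) : ℂ :=
  pInner (T0t.adjoint u) (v : H) - pInner (u : H) (T0.adjoint ⟨(v : H), hW.le v.2⟩)

/-- `X^[⊥]`, the `[·|·]`-orthogonal complement of `X ⊆ W` in the graph space. -/
def iorth (T0 T0t : H →ₗ.[ℂ] H) (hW : T0t.adjoint.domain = T0.adjoint.domain)
    (X : Set ↥T0t.adjoint.domain) : Set ↥T0t.adjoint.domain :=
  {u | ∀ v ∈ X, bform T0 T0t hW u v = 0}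

/-- `W⁺ = {u ∈ W : [u|u] ≥ 0}`. -/
def Wplus (T0 T0t : H →ₗ.[ℂ] H) (hW : T0t.adjoint.domain = T0.adjoint.domain) :
    Set ↥T0t.adjoint.domain :=
  {u | 0 ≤ (bform T0 T0t hW u u).re}

/-- `W⁻ = {u ∈ W : [u|u] ≤ 0}`. -/
def Wminus (T0 T0t : H →ₗ.[ℂ] H) (hW : T0t.adjoint.domain = T0.adjoint.domain) :
    Set ↥T0t.adjoint.domain :=
  {u | (bform T0 T0t hW u u).re ≤ 0}

/-- (V)-boundary conditions for a subset `V` of the graph space `W`. -/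
def VBC (T0 T0t : H →ₗ.[ℂ] H) (hW : T0t.adjoint.domain = T0.adjoint.domain)
    (V : Set ↥T0t.adjoint.domain) : Prop :=
  V ⊆ Wplus T0 T0t hW ∧ iorth T0 T0t hW V ⊆ Wminus T0 T0t hW ∧
    V = iorth T0 T0t hW (iorth T0 T0t hW V)

/-- The graph norm `‖u‖_{T₁} = ‖u‖ + ‖T₁ u‖` on the graph space. -/
def gnorm (T0t : H →ₗ.[ℂ] H) (u : T0t.adjoint.domain) : ℝ :=
  ‖(u : H)‖ + ‖T0t.adjoint u‖

/-- The distance associated with the graph norm. -/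
def gdist (T0t : H →ₗ.[ℂ] H) (u v : T0t.adjoint.domain) : ℝ := gnorm T0t (u - v)

/-- Closedness (sequential) in the graph-norm topology of `W`. -/
def GClosed (T0t : H →ₗ.[ℂ] H) (X : Set ↥T0t.adjoint.domain) : Prop :=
  ∀ f : ℕ → ↥T0t.adjoint.domain, (∀ n, f n ∈ X) →
    ∀ l, Tendsto (fun n => gdist T0t (f n) l) atTop (𝓝 0) → l ∈ X

/-- `W₀` (the domain of the closure of `T₀`), viewed as a subset of the graph space `W`. -/
def W0set (T0 T0t : H →ₗ.[ℂ] H) : Set ↥T0t.adjoint.domain :=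
  {u | (u : H) ∈ T0.closure.domain}

/-- The graph inner product on `W` (in the paper's convention). -/
def gip (T0t : H →ₗ.[ℂ] H) (u v : ↥T0t.adjoint.domain) : ℂ :=
  pInner (u : H) (v : H) + pInner (T0t.adjoint u) (T0t.adjoint v)

/-- The (Hilbert) orthogonal complement of `W₀` in the graph space. -/
def W0perp (T0 T0t : H →ₗ.[ℂ] H) : Set ↥T0t.adjoint.domain :=
  {u | ∀ v : ↥T0t.adjoint.domain, (v : H) ∈ T0.closure.domain → gip T0t u v = 0}

/-- `ker T₁` as a subset of the graph space. -/
def kerT1set (T0t : H →ₗ.[ℂ] H) : Set ↥T0t.adjoint.domain := {u | T0t.adjoint u = 0}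

/-- `ker T̃₁` as a subset of the graph space. -/
def kerT1tset (T0 T0t : H →ₗ.[ℂ] H) (hW : T0t.adjoint.domain = T0.adjoint.domain) :
    Set ↥T0t.adjoint.domain :=
  {u | T0.adjoint ⟨(u : H), hW.le u.2⟩ = 0}

/-- An operator `M ∈ L(W;W')`, encoded through the pairing `m u v = ⟨Mu, v⟩_{W',W}`
(linear in `u`, antilinear in `v`, and bounded with respect to the graph norm). -/
structure MOp (T0t : H →ₗ.[ℂ] H) where
  m : ↥T0t.adjoint.domain → ↥T0t.adjoint.domain → ℂ
  add_left : ∀ u v w, m (u + v) w = m u w + m v w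
  smul_left : ∀ (c : ℂ) (u w), m (c • u) w = c * m u w
  add_right : ∀ u v w, m u (v + w) = m u v + m u w
  smul_right : ∀ (c : ℂ) (u w), m u (c • w) = starRingEnd ℂ c * m u w
  bounded : ∃ C, ∀ u v, ‖m u v‖ ≤ C * (gnorm T0t u * gnorm T0t v)

/-- The (M)-boundary conditions for a pairing `m u v = ⟨Mu, v⟩_{W',W}`:
(M1) non-negativity and (M2) `W = ker (D − M) + ker (D + M)`. -/
def MBC (T0 T0t : H →ₗ.[ℂ] H) (hW : T0t.adjoint.domain = T0.adjoint.domain)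
    (m : ↥T0t.adjoint.domain → ↥T0t.adjoint.domain → ℂ) : Prop :=
  (∀ u, 0 ≤ (m u u).re) ∧
  (∀ w : ↥T0t.adjoint.domain, ∃ a b : ↥T0t.adjoint.domain,
    (∀ v, bform T0 T0t hW a v = m a v) ∧ (∀ v, bform T0 T0t hW b v + m b v = 0) ∧ w = a + b)

/-- `ker (D − M)` for a pairing `m`. -/
def kerDsubM (T0 T0t : H →ₗ.[ℂ] H) (hW : T0t.adjoint.domain = T0.adjoint.domain)
    (m : ↥T0t.adjoint.domain → ↥T0t.adjoint.domain → ℂ) : Set ↥T0t.adjoint.domain :=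
  {u | ∀ v, bform T0 T0t hW u v = m u v}

/-- `ker (D + M)` for a pairing `m`. -/
def kerDaddM (T0 T0t : H →ₗ.[ℂ] H) (hW : T0t.adjoint.domain = T0.adjoint.domain)
    (m : ↥T0t.adjoint.domain → ↥T0t.adjoint.domain → ℂ) : Set ↥T0t.adjoint.domain :=
  {u | ∀ v, bform T0 T0t hW u v + m u v = 0}


/-! ### Auxiliary development -/

section FriedWork

set_option linter.unusedSectionVars false

variable {T0 T0t : H →ₗ.[ℂ] H} {lam mu : ℝ}

/-- `T̃₁ u = T₀* u` on the graph space. -/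
def Tt1 (hW : T0t.adjoint.domain = T0.adjoint.domain) (u : ↥T0t.adjoint.domain) : H :=
  T0.adjoint ⟨(u : H), hW.le u.2⟩

/-- `Φ = T₁ + T̃₁` on the graph space. -/
def PhiW (hW : T0t.adjoint.domain = T0.adjoint.domain) (u : ↥T0t.adjoint.domain) : H :=
  T0t.adjoint u + Tt1 hW u

/-- `Φ₀ = T₀ + T̃₀` on the common domain. -/
def Phi0 (hd : T0.domain = T0t.domain) (φ : ↥T0.domain) : H :=
  T0 φ + T0t ⟨(φ : H), hd.le φ.2⟩

lemma dense_t (hF : IsDualPairT12 T0 T0t lam) : Dense (T0t.domain : Set H) :=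
  hF.dom_eq ▸ hF.dense'

lemma sym1 (hF : IsDualPairT12 T0 T0t lam) (φ : ↥T0.domain) (ψ : ↥T0t.domain) :
    ⟪T0 φ, (ψ : H)⟫_ℂ = ⟪(φ : H), T0t ψ⟫_ℂ := by
  have h := hF.sym φ ψ
  unfold pInner at h
  calc ⟪T0 φ, (ψ : H)⟫_ℂ = starRingEnd ℂ ⟪(ψ : H), T0 φ⟫_ℂ := (inner_conj_symm _ _).symm
    _ = starRingEnd ℂ ⟪T0t ψ, (φ : H)⟫_ℂ := by rw [h]
    _ = ⟪(φ : H), T0t ψ⟫_ℂ := inner_conj_symm _ _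

lemma sym2 (hF : IsDualPairT12 T0 T0t lam) (φ : ↥T0.domain) (ψ : ↥T0.domain) :
    ⟪T0t ⟨(φ : H), hF.dom_eq.le φ.2⟩, (ψ : H)⟫_ℂ = ⟪(φ : H), T0 ψ⟫_ℂ := by
  have h := hF.sym ψ ⟨(φ : H), hF.dom_eq.le φ.2⟩
  unfold pInner at h
  exact h.symm

lemma T1_inner (hF : IsDualPairT12 T0 T0t lam) (u : ↥T0t.adjoint.domain) (ψ : ↥T0t.domain) :
    ⟪T0t.adjoint u, (ψ : H)⟫_ℂ = ⟪(u : H), T0t ψ⟫_ℂ :=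
  LinearPMap.adjoint_isFormalAdjoint (dense_t hF) u ψ

lemma Tt1_inner (hF : IsDualPairT12 T0 T0t lam)
    (hW : T0t.adjoint.domain = T0.adjoint.domain)
    (u : ↥T0t.adjoint.domain) (φ : ↥T0.domain) :
    ⟪Tt1 hW u, (φ : H)⟫_ℂ = ⟪(u : H), T0 φ⟫_ℂ :=
  LinearPMap.adjoint_isFormalAdjoint hF.dense' ⟨(u : H), hW.le u.2⟩ φ

lemma Phi0_symm (hF : IsDualPairT12 T0 T0t lam) (φ ψ : ↥T0.domain) :
    ⟪Phi0 hF.dom_eq φ, (ψ : H)⟫_ℂ = ⟪(φ : H), Phi0 hF.dom_eq ψ⟫_ℂ := by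
  unfold Phi0
  rw [inner_add_left, inner_add_right, sym1 hF φ ⟨(ψ : H), hF.dom_eq.le ψ.2⟩, sym2 hF φ ψ]
  ring

lemma Phi0_inner_W (hF : IsDualPairT12 T0 T0t lam)
    (hW : T0t.adjoint.domain = T0.adjoint.domain)
    (u : ↥T0t.adjoint.domain) (ψ : ↥T0.domain) :
    ⟪PhiW hW u, (ψ : H)⟫_ℂ = ⟪(u : H), Phi0 hF.dom_eq ψ⟫_ℂ := by
  unfold PhiW Phi0
  rw [inner_add_left, inner_add_right,
    T1_inner hF u ⟨(ψ : H), hF.dom_eq.le ψ.2⟩, Tt1_inner hF hW u ψ]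
  ring

lemma Phi0_sub (hF : IsDualPairT12 T0 T0t lam) (x y : ↥T0.domain) :
    Phi0 hF.dom_eq x - Phi0 hF.dom_eq y = Phi0 hF.dom_eq (x - y) := by
  unfold Phi0
  have h1 : T0 (x - y) = T0 x - T0 y := T0.map_sub x y
  have h2 : T0t ⟨((x - y : ↥T0.domain) : H), hF.dom_eq.le (x - y).2⟩
      = T0t ⟨(x : H), hF.dom_eq.le x.2⟩ - T0t ⟨(y : H), hF.dom_eq.le y.2⟩ := by
    rw [show (⟨((x - y : ↥T0.domain) : H), hF.dom_eq.le (x - y).2⟩ : ↥T0t.domain)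
        = ⟨(x : H), hF.dom_eq.le x.2⟩ - ⟨(y : H), hF.dom_eq.le y.2⟩ from Subtype.ext rfl]
    exact T0t.map_sub _ _
  rw [h1, h2]; abel

lemma Phi0_norm_le (hF : IsDualPairT12 T0 T0t lam) (x : ↥T0.domain) :
    ‖Phi0 hF.dom_eq x‖ ≤ 2 * lam * ‖(x : H)‖ :=
  hF.bound x.1 x.2

lemma exists_approx (hF : IsDualPairT12 T0 T0t lam) (u : H) :
    ∃ f : ℕ → ↥T0.domain, Tendsto (fun n => ((f n : H))) atTop (𝓝 u) := by
  obtain ⟨x, hxmem, hxt⟩ := mem_closure_iff_seq_limit.mp (hF.dense' u)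
  exact ⟨fun n => ⟨x n, hxmem n⟩, hxt⟩

lemma Phi0_tendsto (hF : IsDualPairT12 T0 T0t lam)
    (hW : T0t.adjoint.domain = T0.adjoint.domain)
    {u : H} (hu : u ∈ T0t.adjoint.domain) (f : ℕ → ↥T0.domain)
    (hf : Tendsto (fun n => ((f n : H))) atTop (𝓝 u)) :
    Tendsto (fun n => Phi0 hF.dom_eq (f n)) atTop (𝓝 (PhiW hW ⟨u, hu⟩)) := by
  have hlam : (0:ℝ) < lam := hF.lam_pos
  have hcau : CauchySeq (fun n => Phi0 hF.dom_eq (f n)) := by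
    have hc : CauchySeq (fun n => ((f n : H))) := hf.cauchySeq
    rw [Metric.cauchySeq_iff] at hc ⊢
    intro ε hε
    obtain ⟨N, hN⟩ := hc (ε / (2 * lam + 1)) (by positivity)
    refine ⟨N, fun m hm n hn => ?_⟩
    have h1 := hN m hm n hn
    rw [dist_eq_norm] at h1 ⊢
    calc ‖Phi0 hF.dom_eq (f m) - Phi0 hF.dom_eq (f n)‖
        = ‖Phi0 hF.dom_eq (f m - f n)‖ := by rw [Phi0_sub hF]
      _ ≤ 2 * lam * ‖((f m - f n : ↥T0.domain) : H)‖ := Phi0_norm_le hF _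
      _ = 2 * lam * ‖((f m : H)) - ((f n : H))‖ := by rw [Submodule.coe_sub]
      _ < ε := by
          have h3 : (0:ℝ) ≤ ‖((f m : H)) - ((f n : H))‖ := norm_nonneg _
          have h4 : (0:ℝ) < 2 * lam + 1 := by linarith
          rw [lt_div_iff₀ h4] at h1
          nlinarith [mul_nonneg h3 hlam.le]
  obtain ⟨g, hg⟩ := cauchySeq_tendsto_of_complete hcau
  have key : g = PhiW hW ⟨u, hu⟩ := by
    refine hF.dense'.eq_of_inner_left ℂ fun ψ' hψ => ?_
    let ψ : ↥T0.domain := ⟨ψ', hψ⟩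
    show ⟪g, (ψ : H)⟫_ℂ = ⟪PhiW hW ⟨u, hu⟩, (ψ : H)⟫_ℂ
    have h1 : Tendsto (fun n => ⟪Phi0 hF.dom_eq (f n), (ψ : H)⟫_ℂ) atTop
        (𝓝 ⟪g, (ψ : H)⟫_ℂ) := hg.inner tendsto_const_nhds
    have h2 : (fun n => ⟪Phi0 hF.dom_eq (f n), (ψ : H)⟫_ℂ)
        = fun n => ⟪((f n : H)), Phi0 hF.dom_eq ψ⟫_ℂ := funext fun n => Phi0_symm hF (f n) ψ
    have h3 : Tendsto (fun n => ⟪((f n : H)), Phi0 hF.dom_eq ψ⟫_ℂ) atTop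
        (𝓝 ⟪u, Phi0 hF.dom_eq ψ⟫_ℂ) := hf.inner tendsto_const_nhds
    rw [h2] at h1
    rw [tendsto_nhds_unique h1 h3]
    exact (Phi0_inner_W hF hW ⟨u, hu⟩ ψ).symm
  rwa [key] at hg

lemma PhiW_symm (hF : IsDualPairT12 T0 T0t lam)
    (hW : T0t.adjoint.domain = T0.adjoint.domain) (u v : ↥T0t.adjoint.domain) :
    ⟪PhiW hW u, (v : H)⟫_ℂ = ⟪(u : H), PhiW hW v⟫_ℂ := by
  obtain ⟨f, hf⟩ := exists_approx hF (v : H)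
  have hPhi := Phi0_tendsto hF hW v.2 f hf
  have h1 : Tendsto (fun n => ⟪PhiW hW u, ((f n : H))⟫_ℂ) atTop
      (𝓝 ⟪PhiW hW u, (v : H)⟫_ℂ) := tendsto_const_nhds.inner hf
  have h2 : Tendsto (fun n => ⟪(u : H), Phi0 hF.dom_eq (f n)⟫_ℂ) atTop
      (𝓝 ⟪(u : H), PhiW hW ⟨(v : H), v.2⟩⟫_ℂ) := tendsto_const_nhds.inner hPhi
  have h3 : (fun n => ⟪PhiW hW u, ((f n : H))⟫_ℂ)
      = fun n => ⟪(u : H), Phi0 hF.dom_eq (f n)⟫_ℂ := funext fun n => Phi0_inner_W hF hW u (f n)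
  rw [h3] at h1
  simpa using tendsto_nhds_unique h1 h2

lemma PhiW_coercive (hF : IsFriedrichsPair T0 T0t lam mu)
    (hW : T0t.adjoint.domain = T0.adjoint.domain) (u : ↥T0t.adjoint.domain) :
    2 * mu * ‖(u : H)‖ ^ 2 ≤ (⟪PhiW hW u, (u : H)⟫_ℂ).re := by
  obtain ⟨f, hf⟩ := exists_approx hF.toIsDualPairT12 (u : H)
  have hPhi := Phi0_tendsto hF.toIsDualPairT12 hW u.2 f hf
  have h1 : Tendsto (fun n => (⟪Phi0 hF.dom_eq (f n), ((f n : H))⟫_ℂ).re) atTop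
      (𝓝 (⟪PhiW hW ⟨(u : H), u.2⟩, (u : H)⟫_ℂ).re) :=
    (Complex.continuous_re.tendsto _).comp (hPhi.inner hf)
  have h2 : Tendsto (fun n => 2 * mu * ‖((f n : H))‖ ^ 2) atTop
      (𝓝 (2 * mu * ‖(u : H)‖ ^ 2)) := by
    have := (hf.norm).pow 2
    exact this.const_mul _
  have hle : ∀ n, 2 * mu * ‖((f n : H))‖ ^ 2 ≤ (⟪Phi0 hF.dom_eq (f n), ((f n : H))⟫_ℂ).re := by
    intro n
    have h4 := hF.coercive (f n).1 (f n).2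
    unfold pInner at h4
    calc 2 * mu * ‖((f n : H))‖ ^ 2 ≤ (⟪((f n : H)), Phi0 hF.dom_eq (f n)⟫_ℂ).re := h4
      _ = (⟪Phi0 hF.dom_eq (f n), ((f n : H))⟫_ℂ).re := by
          rw [← inner_conj_symm, Complex.conj_re]
  simpa using le_of_tendsto_of_tendsto' h2 h1 hle

lemma PhiW_norm_le (hF : IsDualPairT12 T0 T0t lam)
    (hW : T0t.adjoint.domain = T0.adjoint.domain) (u : ↥T0t.adjoint.domain) :
    ‖PhiW hW u‖ ≤ 2 * lam * ‖(u : H)‖ := by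
  obtain ⟨f, hf⟩ := exists_approx hF (u : H)
  have hPhi := Phi0_tendsto hF hW u.2 f hf
  have h1 : Tendsto (fun n => ‖Phi0 hF.dom_eq (f n)‖) atTop
      (𝓝 ‖PhiW hW ⟨(u : H), u.2⟩‖) := hPhi.norm
  have h2 : Tendsto (fun n => 2 * lam * ‖((f n : H))‖) atTop (𝓝 (2 * lam * ‖(u : H)‖)) :=
    hf.norm.const_mul _
  simpa using le_of_tendsto_of_tendsto' h1 h2 fun n => Phi0_norm_le hF (f n)

lemma bform_def (hW : T0t.adjoint.domain = T0.adjoint.domain) (u v : ↥T0t.adjoint.domain) :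
    bform T0 T0t hW u v = ⟪(v : H), T0t.adjoint u⟫_ℂ - ⟪Tt1 hW v, (u : H)⟫_ℂ := rfl

lemma bform_herm (hF : IsDualPairT12 T0 T0t lam)
    (hW : T0t.adjoint.domain = T0.adjoint.domain) (u v : ↥T0t.adjoint.domain) :
    bform T0 T0t hW v u = starRingEnd ℂ (bform T0 T0t hW u v) := by
  have h := PhiW_symm hF hW u v
  simp only [PhiW, inner_add_left, inner_add_right] at h
  rw [bform_def, bform_def, _root_.map_sub, inner_conj_symm, inner_conj_symm]
  linear_combination -h


/-! #### Sesquilinearity of the boundary form -/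

lemma Tt1_add (hW : T0t.adjoint.domain = T0.adjoint.domain) (u v : ↥T0t.adjoint.domain) :
    Tt1 hW (u + v) = Tt1 hW u + Tt1 hW v := by
  unfold Tt1
  rw [show (⟨((u + v : ↥T0t.adjoint.domain) : H), hW.le (u + v).2⟩ : ↥T0.adjoint.domain)
      = ⟨(u : H), hW.le u.2⟩ + ⟨(v : H), hW.le v.2⟩ from Subtype.ext rfl]
  exact T0.adjoint.map_add _ _

lemma Tt1_sub (hW : T0t.adjoint.domain = T0.adjoint.domain) (u v : ↥T0t.adjoint.domain) :
    Tt1 hW (u - v) = Tt1 hW u - Tt1 hW v := by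
  unfold Tt1
  rw [show (⟨((u - v : ↥T0t.adjoint.domain) : H), hW.le (u - v).2⟩ : ↥T0.adjoint.domain)
      = ⟨(u : H), hW.le u.2⟩ - ⟨(v : H), hW.le v.2⟩ from Subtype.ext rfl]
  exact T0.adjoint.map_sub _ _

lemma Tt1_smul (hW : T0t.adjoint.domain = T0.adjoint.domain) (c : ℂ) (u : ↥T0t.adjoint.domain) :
    Tt1 hW (c • u) = c • Tt1 hW u := by
  unfold Tt1
  rw [show (⟨((c • u : ↥T0t.adjoint.domain) : H), hW.le (c • u).2⟩ : ↥T0.adjoint.domain)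
      = c • ⟨(u : H), hW.le u.2⟩ from Subtype.ext rfl]
  exact T0.adjoint.map_smul _ _

lemma bform_add_left (hW : T0t.adjoint.domain = T0.adjoint.domain) (u u' v : ↥T0t.adjoint.domain) :
    bform T0 T0t hW (u + u') v = bform T0 T0t hW u v + bform T0 T0t hW u' v := by
  simp only [bform_def, T0t.adjoint.map_add, Submodule.coe_add, inner_add_left, inner_add_right]
  ring

lemma bform_sub_left (hW : T0t.adjoint.domain = T0.adjoint.domain) (u u' v : ↥T0t.adjoint.domain) :
    bform T0 T0t hW (u - u') v = bform T0 T0t hW u v - bform T0 T0t hW u' v := by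
  simp only [bform_def, T0t.adjoint.map_sub, Submodule.coe_sub, inner_sub_left, inner_sub_right]
  ring

lemma bform_smul_left (hW : T0t.adjoint.domain = T0.adjoint.domain) (c : ℂ)
    (u v : ↥T0t.adjoint.domain) :
    bform T0 T0t hW (c • u) v = c * bform T0 T0t hW u v := by
  simp only [bform_def, T0t.adjoint.map_smul, Submodule.coe_smul, inner_smul_right]
  ring

lemma bform_add_right (hW : T0t.adjoint.domain = T0.adjoint.domain) (u v v' : ↥T0t.adjoint.domain) :
    bform T0 T0t hW u (v + v') = bform T0 T0t hW u v + bform T0 T0t hW u v' := by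
  simp only [bform_def, Tt1_add, Submodule.coe_add, inner_add_left]
  ring

lemma bform_sub_right (hW : T0t.adjoint.domain = T0.adjoint.domain) (u v v' : ↥T0t.adjoint.domain) :
    bform T0 T0t hW u (v - v') = bform T0 T0t hW u v - bform T0 T0t hW u v' := by
  simp only [bform_def, Tt1_sub, Submodule.coe_sub, inner_sub_left]
  ring

/-! #### Cauchy–Schwarz trick for the nonnegative part of `M` -/

lemma m_cs (M : MOp T0t) (hM1 : ∀ u, 0 ≤ (M.m u u).re) {u : ↥T0t.adjoint.domain}
    (h0 : (M.m u u).re = 0) :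
    ∀ v, M.m u v + starRingEnd ℂ (M.m v u) = 0 := by
  have key : ∀ v : ↥T0t.adjoint.domain, (M.m u v).re + (M.m v u).re = 0 := by
    intro v
    set r := (M.m u v).re + (M.m v u).re with hr
    set c := (M.m v v).re with hc
    have hc0 : 0 ≤ c := hM1 v
    have hq : ∀ t : ℝ, 0 ≤ t * r + t * (t * c) := by
      intro t
      have h := hM1 (u + (t : ℂ) • v)
      have hexp : M.m (u + (t : ℂ) • v) (u + (t : ℂ) • v)
          = M.m u u + (t : ℂ) * (M.m u v + M.m v u) + (t : ℂ) * ((t : ℂ) * M.m v v) := by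
        rw [M.add_left, M.add_right, M.add_right, M.smul_left, M.smul_right, M.smul_right,
          Complex.conj_ofReal, M.smul_left]
        ring
      rw [hexp] at h
      simp only [Complex.add_re, Complex.re_ofReal_mul, h0, zero_add] at h
      exact h
    have hcp : (0:ℝ) < c + 1 := by linarith
    set q := r / (c + 1) with hqdef
    have hne : c + 1 ≠ 0 := ne_of_gt hcp
    have hqc : q * (c + 1) = r := div_mul_cancel₀ r hne
    have h := hq (-q)
    have h4 : -q * (q * (c + 1)) = -q * r := by rw [hqc]
    have h2 : 0 ≤ -(q * q) := by nlinarith [h, h4]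
    have h3 : q = 0 := by nlinarith [mul_self_nonneg q]
    rw [← hqc, h3, zero_mul]
  intro v
  have h1 := key v
  have h2 := key (Complex.I • v)
  rw [M.smul_right, M.smul_left, Complex.conj_I] at h2
  apply Complex.ext
  · simpa using h1
  · simp only [Complex.mul_re, Complex.neg_re, Complex.I_re, Complex.neg_im, Complex.I_im,
      Complex.add_im, Complex.conj_im, Complex.zero_im] at h2 ⊢
    linarith

/-! #### The algebraic part of the theorem -/

lemma kerD_m_zero (hF : IsDualPairT12 T0 T0t lam)
    (hW : T0t.adjoint.domain = T0.adjoint.domain) (M : MOp T0t) (hM : MBC T0 T0t hW M.m)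
    {u : ↥T0t.adjoint.domain} (hu : ∀ w, bform T0 T0t hW u w = 0) :
    (∀ w, M.m w u = 0) ∧ (∀ w, M.m u w = 0) := by
  have h1 : ∀ w, M.m w u = 0 := by
    intro w
    obtain ⟨a, b, ha, hb, hab⟩ := hM.2 w
    have haa : M.m a u = 0 := by
      rw [← ha u, bform_herm hF hW, hu a, _root_.map_zero]
    have hbb : M.m b u = 0 := by
      have h := hb u
      rw [bform_herm hF hW, hu b, _root_.map_zero, zero_add] at h
      exact h
    rw [hab, M.add_left, haa, hbb, add_zero]
  have h00 : (M.m u u).re = 0 := by rw [h1 u]; simp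
  refine ⟨h1, fun w => ?_⟩
  have h2 := m_cs M hM.1 h00 w
  rw [h1 w, _root_.map_zero, add_zero] at h2
  exact h2

lemma kerD_subset_V (hF : IsDualPairT12 T0 T0t lam)
    (hW : T0t.adjoint.domain = T0.adjoint.domain) (M : MOp T0t) (hM : MBC T0 T0t hW M.m)
    {u : ↥T0t.adjoint.domain} (hu : ∀ w, bform T0 T0t hW u w = 0) :
    u ∈ kerDsubM T0 T0t hW M.m :=
  fun v => by rw [hu v, (kerD_m_zero hF hW M hM hu).2 v]

/-- `V^[⊥] = ker (D + M*)` -/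
lemma iorth_V_eq (hF : IsDualPairT12 T0 T0t lam)
    (hW : T0t.adjoint.domain = T0.adjoint.domain) (M : MOp T0t) (hM : MBC T0 T0t hW M.m) :
    iorth T0 T0t hW (kerDsubM T0 T0t hW M.m) =
      {u : ↥T0t.adjoint.domain | ∀ v, bform T0 T0t hW u v + starRingEnd ℂ (M.m v u) = 0} := by
  ext u
  constructor
  · intro hu v
    obtain ⟨a, b, ha, hb, hab⟩ := hM.2 v
    have haV : a ∈ kerDsubM T0 T0t hW M.m := ha
    have h1 : bform T0 T0t hW u a = 0 := hu a haV
    have h2 : starRingEnd ℂ (M.m a u) = 0 := by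
      rw [← ha u, ← bform_herm hF hW, h1]
    have h3 : starRingEnd ℂ (M.m b u) = - bform T0 T0t hW u b := by
      have h := hb u
      have hbu : M.m b u = - bform T0 T0t hW b u := by linear_combination h
      rw [hbu, _root_.map_neg, ← bform_herm hF hW]
    rw [hab, bform_add_right, M.add_left, _root_.map_add, h1, h2, h3]
    ring
  · intro hu v hv
    have h1 := hu v
    have h2 : starRingEnd ℂ (M.m v u) = bform T0 T0t hW u v := by
      rw [← hv u, ← bform_herm hF hW]
    rw [h2] at h1
    have : (2:ℂ) * bform T0 T0t hW u v = 0 := by linear_combination h1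
    simpa using this

lemma V_subset_Wplus (hW : T0t.adjoint.domain = T0.adjoint.domain) (M : MOp T0t)
    (hM : MBC T0 T0t hW M.m) :
    kerDsubM T0 T0t hW M.m ⊆ Wplus T0 T0t hW := by
  intro u hu
  have h := hu u
  simp only [Wplus, Set.mem_setOf_eq, h]
  exact hM.1 u

lemma iorthV_subset_Wminus (hF : IsDualPairT12 T0 T0t lam)
    (hW : T0t.adjoint.domain = T0.adjoint.domain) (M : MOp T0t) (hM : MBC T0 T0t hW M.m) :
    iorth T0 T0t hW (kerDsubM T0 T0t hW M.m) ⊆ Wminus T0 T0t hW := by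
  intro u hu
  rw [iorth_V_eq hF hW M hM] at hu
  have h := hu u
  have h2 : bform T0 T0t hW u u = - starRingEnd ℂ (M.m u u) := by linear_combination h
  simp only [Wminus, Set.mem_setOf_eq, h2, Complex.neg_re, Complex.conj_re]
  simpa using hM.1 u

lemma V_subset_iorth_iorth (hF : IsDualPairT12 T0 T0t lam)
    (hW : T0t.adjoint.domain = T0.adjoint.domain) (X : Set ↥T0t.adjoint.domain) :
    X ⊆ iorth T0 T0t hW (iorth T0 T0t hW X) := by
  intro v hv y hy
  rw [bform_herm hF hW, hy v hv, _root_.map_zero]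


/-! #### Structural analytic lemmas -/

lemma PhiW_add (hW : T0t.adjoint.domain = T0.adjoint.domain) (u v : ↥T0t.adjoint.domain) :
    PhiW hW (u + v) = PhiW hW u + PhiW hW v := by
  unfold PhiW
  rw [T0t.adjoint.map_add, Tt1_add]
  abel

lemma PhiW_smul (hW : T0t.adjoint.domain = T0.adjoint.domain) (c : ℂ)
    (u : ↥T0t.adjoint.domain) :
    PhiW hW (c • u) = c • PhiW hW u := by
  unfold PhiW
  rw [T0t.adjoint.map_smul, Tt1_smul, smul_add]

lemma bform_zero_left (hW : T0t.adjoint.domain = T0.adjoint.domain) (v : ↥T0t.adjoint.domain) :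
    bform T0 T0t hW 0 v = 0 := by
  have h := bform_sub_left hW 0 0 v
  rw [sub_zero] at h
  linear_combination h

/-- Sequential limit lemma for graphs of adjoint operators. -/
lemma adj_limit {T : H →ₗ.[ℂ] H} (hd : Dense (T.domain : Set H)) {x y : H}
    (f : ℕ → ↥T.adjoint.domain)
    (hx : Tendsto (fun n => ((f n : H))) atTop (𝓝 x))
    (hy : Tendsto (fun n => T.adjoint (f n)) atTop (𝓝 y)) :
    ∃ hx' : x ∈ T.adjoint.domain, T.adjoint ⟨x, hx'⟩ = y := by
  have hkey : ∀ z : ↥T.domain, ⟪y, (z : H)⟫_ℂ = ⟪x, T z⟫_ℂ := by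
    intro z
    have h1 : Tendsto (fun n => ⟪T.adjoint (f n), (z : H)⟫_ℂ) atTop
        (𝓝 ⟪y, (z : H)⟫_ℂ) := hy.inner tendsto_const_nhds
    have h2 : (fun n => ⟪T.adjoint (f n), (z : H)⟫_ℂ) = fun n => ⟪((f n : H)), T z⟫_ℂ :=
      funext fun n => LinearPMap.adjoint_isFormalAdjoint hd (f n) z
    have h3 : Tendsto (fun n => ⟪((f n : H)), T z⟫_ℂ) atTop (𝓝 ⟪x, T z⟫_ℂ) :=
      hx.inner tendsto_const_nhds
    rw [h2] at h1
    exact tendsto_nhds_unique h1 h3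
  have hmem : x ∈ T.adjoint.domain :=
    LinearPMap.mem_adjoint_domain_of_exists x ⟨y, fun z => hkey z⟩
  exact ⟨hmem, LinearPMap.adjoint_apply_eq hd ⟨x, hmem⟩ fun z => hkey z⟩

/-- The kernel of the adjoint of `T`, as a submodule of `H`. -/
def kerAdj (T : H →ₗ.[ℂ] H) : Submodule ℂ H where
  carrier := {x | ∃ hx : x ∈ T.adjoint.domain, T.adjoint ⟨x, hx⟩ = 0}
  add_mem' := by
    rintro x y ⟨hx, hx0⟩ ⟨hy, hy0⟩
    refine ⟨Submodule.add_mem _ hx hy, ?_⟩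
    rw [show (⟨x + y, Submodule.add_mem _ hx hy⟩ : ↥T.adjoint.domain)
        = ⟨x, hx⟩ + ⟨y, hy⟩ from Subtype.ext rfl, T.adjoint.map_add, hx0, hy0, add_zero]
  zero_mem' := by
    refine ⟨Submodule.zero_mem _, ?_⟩
    rw [show (⟨(0 : H), Submodule.zero_mem _⟩ : ↥T.adjoint.domain) = 0 from Subtype.ext rfl]
    exact T.adjoint.map_zero
  smul_mem' := by
    rintro c x ⟨hx, hx0⟩
    refine ⟨Submodule.smul_mem _ c hx, ?_⟩
    rw [show (⟨c • x, Submodule.smul_mem _ c hx⟩ : ↥T.adjoint.domain)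
        = c • ⟨x, hx⟩ from Subtype.ext rfl, T.adjoint.map_smul, hx0, smul_zero]

lemma kerAdj_closed {T : H →ₗ.[ℂ] H} (hd : Dense (T.domain : Set H)) :
    IsClosed ((kerAdj T : Submodule ℂ H) : Set H) := by
  apply IsSeqClosed.isClosed
  intro f x hf hfx
  have hchoice : ∀ n, ∃ hx : f n ∈ T.adjoint.domain, T.adjoint ⟨f n, hx⟩ = 0 := hf
  choose hmem hval using hchoice
  obtain ⟨hx', hv⟩ := adj_limit hd (fun n => (⟨f n, hmem n⟩ : ↥T.adjoint.domain)) hfx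
    (by
      have heq : (fun n => T.adjoint (⟨f n, hmem n⟩ : ↥T.adjoint.domain)) = fun _ => (0 : H) :=
        funext fun n => hval n
      rw [heq]
      exact tendsto_const_nhds)
  exact ⟨hx', hv⟩

/-- The range of `T₁` restricted to `ker D`, as a submodule of `H`. -/
def ranR (T0 T0t : H →ₗ.[ℂ] H) (hW : T0t.adjoint.domain = T0.adjoint.domain) : Submodule ℂ H where
  carrier := {g | ∃ (x : H) (hx : x ∈ T0t.adjoint.domain),
    (∀ w, bform T0 T0t hW ⟨x, hx⟩ w = 0) ∧ T0t.adjoint ⟨x, hx⟩ = g}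
  add_mem' := by
    rintro g g' ⟨x, hx, hker, hval⟩ ⟨x', hx', hker', hval'⟩
    refine ⟨x + x', Submodule.add_mem _ hx hx', fun w => ?_, ?_⟩
    · rw [show (⟨x + x', Submodule.add_mem _ hx hx'⟩ : ↥T0t.adjoint.domain)
          = ⟨x, hx⟩ + ⟨x', hx'⟩ from Subtype.ext rfl, bform_add_left, hker w, hker' w, add_zero]
    · rw [show (⟨x + x', Submodule.add_mem _ hx hx'⟩ : ↥T0t.adjoint.domain)
          = ⟨x, hx⟩ + ⟨x', hx'⟩ from Subtype.ext rfl, T0t.adjoint.map_add, hval, hval']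
  zero_mem' := by
    refine ⟨0, Submodule.zero_mem _, fun w => ?_, ?_⟩
    · rw [show (⟨(0 : H), Submodule.zero_mem _⟩ : ↥T0t.adjoint.domain) = 0 from Subtype.ext rfl]
      exact bform_zero_left hW w
    · rw [show (⟨(0 : H), Submodule.zero_mem _⟩ : ↥T0t.adjoint.domain) = 0 from Subtype.ext rfl]
      exact T0t.adjoint.map_zero
  smul_mem' := by
    rintro c g ⟨x, hx, hker, hval⟩
    refine ⟨c • x, Submodule.smul_mem _ c hx, fun w => ?_, ?_⟩
    · rw [show (⟨c • x, Submodule.smul_mem _ c hx⟩ : ↥T0t.adjoint.domain)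
          = c • ⟨x, hx⟩ from Subtype.ext rfl, bform_smul_left, hker w, mul_zero]
    · rw [show (⟨c • x, Submodule.smul_mem _ c hx⟩ : ↥T0t.adjoint.domain)
          = c • ⟨x, hx⟩ from Subtype.ext rfl, T0t.adjoint.map_smul, hval]

lemma kerD_coer (hF : IsFriedrichsPair T0 T0t lam mu)
    (hW : T0t.adjoint.domain = T0.adjoint.domain) {u : ↥T0t.adjoint.domain}
    (hker : ∀ w, bform T0 T0t hW u w = 0) :
    mu * ‖(u : H)‖ ≤ ‖T0t.adjoint u‖ := by
  have h0 := hker u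
  rw [bform_def, sub_eq_zero] at h0
  have hco := PhiW_coercive hF hW u
  unfold PhiW at hco
  rw [inner_add_left, Complex.add_re] at hco
  have h1 : (⟪Tt1 hW u, (u : H)⟫_ℂ).re = (⟪T0t.adjoint u, (u : H)⟫_ℂ).re := by
    rw [← h0, ← inner_conj_symm, Complex.conj_re]
  rw [h1] at hco
  have h2 : (⟪T0t.adjoint u, (u : H)⟫_ℂ).re ≤ ‖T0t.adjoint u‖ * ‖(u : H)‖ := by
    calc (⟪T0t.adjoint u, (u : H)⟫_ℂ).re ≤ ‖⟪T0t.adjoint u, (u : H)⟫_ℂ‖ :=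
        Complex.re_le_norm _
      _ = ‖⟪T0t.adjoint u, (u : H)⟫_ℂ‖ := rfl
      _ ≤ ‖T0t.adjoint u‖ * ‖(u : H)‖ := norm_inner_le_norm _ _
  rcases eq_or_lt_of_le (norm_nonneg (u : H)) with h3 | h3
  · rw [← h3, mul_zero]
    exact norm_nonneg _
  · nlinarith

lemma ranR_closed (hF : IsFriedrichsPair T0 T0t lam mu)
    (hW : T0t.adjoint.domain = T0.adjoint.domain) :
    IsClosed ((ranR T0 T0t hW : Submodule ℂ H) : Set H) := by
  apply IsSeqClosed.isClosed
  intro g y hg hgy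
  choose x hx hker hval using hg
  have hmu : (0:ℝ) < mu := hF.mu_pos
  have hcau : CauchySeq x := by
    have hcg : CauchySeq g := hgy.cauchySeq
    rw [Metric.cauchySeq_iff] at hcg ⊢
    intro ε hε
    obtain ⟨N, hN⟩ := hcg (mu * ε) (by positivity)
    refine ⟨N, fun m hm n hn => ?_⟩
    have h1 := hN m hm n hn
    rw [dist_eq_norm] at h1 ⊢
    have hd : ∀ w, bform T0 T0t hW (⟨x m, hx m⟩ - ⟨x n, hx n⟩) w = 0 := fun w => by
      rw [bform_sub_left, hker m w, hker n w, sub_zero]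
    have h2 := kerD_coer hF hW hd
    rw [T0t.adjoint.map_sub, hval m, hval n] at h2
    have h3 : ((⟨x m, hx m⟩ - ⟨x n, hx n⟩ : ↥T0t.adjoint.domain) : H) = x m - x n := rfl
    rw [h3] at h2
    nlinarith [h2, h1, mul_pos hmu hε]
  obtain ⟨p, hp⟩ := cauchySeq_tendsto_of_complete hcau
  have hgy' : Tendsto (fun n => T0t.adjoint (⟨x n, hx n⟩ : ↥T0t.adjoint.domain)) atTop (𝓝 y) := by
    simpa [hval] using hgy
  obtain ⟨hpW, hpv⟩ := adj_limit (dense_t hF.toIsDualPairT12) (fun n => ⟨x n, hx n⟩) hp hgy'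
  refine ⟨p, hpW, fun w => ?_, hpv⟩
  have h1 : Tendsto (fun n => bform T0 T0t hW ⟨x n, hx n⟩ w) atTop
      (𝓝 (bform T0 T0t hW ⟨p, hpW⟩ w)) := by
    simp only [bform_def]
    have ha : Tendsto (fun n => ⟪(w : H), T0t.adjoint (⟨x n, hx n⟩ : ↥T0t.adjoint.domain)⟫_ℂ)
        atTop (𝓝 ⟪(w : H), T0t.adjoint (⟨p, hpW⟩ : ↥T0t.adjoint.domain)⟫_ℂ) := by
      rw [hpv]
      exact tendsto_const_nhds.inner hgy'
    have hb : Tendsto (fun n => ⟪Tt1 hW w, x n⟫_ℂ) atTop (𝓝 ⟪Tt1 hW w, p⟫_ℂ) :=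
      tendsto_const_nhds.inner hp
    exact ha.sub hb
  have h2 : (fun n => bform T0 T0t hW ⟨x n, hx n⟩ w) = fun _ => (0:ℂ) := funext fun n => hker n w
  rw [h2] at h1
  exact tendsto_nhds_unique h1 tendsto_const_nhds

lemma domT0_props (hF : IsDualPairT12 T0 T0t lam)
    (hW : T0t.adjoint.domain = T0.adjoint.domain) (φ : ↥T0.domain) :
    ∃ hx : (φ : H) ∈ T0t.adjoint.domain,
      T0t.adjoint ⟨(φ : H), hx⟩ = T0 φ ∧ ∀ w, bform T0 T0t hW ⟨(φ : H), hx⟩ w = 0 := by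
  have hmem : (φ : H) ∈ T0t.adjoint.domain :=
    LinearPMap.mem_adjoint_domain_of_exists _ ⟨T0 φ, fun ψ => sym1 hF φ ψ⟩
  have hval : T0t.adjoint ⟨(φ : H), hmem⟩ = T0 φ :=
    LinearPMap.adjoint_apply_eq (dense_t hF) ⟨(φ : H), hmem⟩ fun ψ => sym1 hF φ ψ
  refine ⟨hmem, hval, fun w => ?_⟩
  rw [bform_def, hval, Tt1_inner hF hW w φ, sub_self]

lemma ranR_perp_subset (hF : IsDualPairT12 T0 T0t lam)
    (hW : T0t.adjoint.domain = T0.adjoint.domain) {h : H}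
    (hperp : h ∈ (ranR T0 T0t hW)ᗮ) : h ∈ kerAdj T0 := by
  have hkey : ∀ z : ↥T0.domain, ⟪(0 : H), (z : H)⟫_ℂ = ⟪h, T0 z⟫_ℂ := by
    intro z
    obtain ⟨hx, hval, hker⟩ := domT0_props hF hW z
    have hmem : T0 z ∈ ranR T0 T0t hW := ⟨(z : H), hx, hker, hval⟩
    have h1 : ⟪T0 z, h⟫_ℂ = 0 := (Submodule.mem_orthogonal _ _).mp hperp _ hmem
    rw [inner_zero_left, ← inner_conj_symm, h1]
    simp
  have hmem : h ∈ T0.adjoint.domain :=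
    LinearPMap.mem_adjoint_domain_of_exists h ⟨0, fun z => hkey z⟩
  exact ⟨hmem, LinearPMap.adjoint_apply_eq hF.dense' ⟨h, hmem⟩ fun z => hkey z⟩

/-- Surjectivity of coercive bounded operators on a Hilbert space. -/
lemma surj_of_coercive {E : Type*} [NormedAddCommGroup E] [InnerProductSpace ℂ E]
    [CompleteSpace E] (A : E →ₗ[ℂ] E) (C : ℝ) (hC : ∀ x, ‖A x‖ ≤ C * ‖x‖) {c : ℝ} (hc : 0 < c)
    (hcoer : ∀ x, c * ‖x‖ ^ 2 ≤ (⟪A x, x⟫_ℂ).re) : Function.Surjective A := by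
  have hlow : ∀ x, c * ‖x‖ ≤ ‖A x‖ := by
    intro x
    have h1 := hcoer x
    have h2 : (⟪A x, x⟫_ℂ).re ≤ ‖A x‖ * ‖x‖ := by
      calc (⟪A x, x⟫_ℂ).re ≤ ‖⟪A x, x⟫_ℂ‖ := Complex.re_le_norm _
        _ = ‖⟪A x, x⟫_ℂ‖ := rfl
        _ ≤ ‖A x‖ * ‖x‖ := norm_inner_le_norm _ _
    rcases eq_or_lt_of_le (norm_nonneg x) with h3 | h3
    · rw [← h3, mul_zero]
      exact norm_nonneg _
    · nlinarith
  have hcont : Continuous A := AddMonoidHomClass.continuous_of_bound A C hC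
  have hclosed : IsClosed ((LinearMap.range A : Submodule ℂ E) : Set E) := by
    apply IsSeqClosed.isClosed
    intro g y hg hgy
    have hg' : ∀ n, ∃ xx, A xx = g n := fun n => hg n
    choose x hx using hg'
    have hcau : CauchySeq x := by
      have hcg : CauchySeq g := hgy.cauchySeq
      rw [Metric.cauchySeq_iff] at hcg ⊢
      intro ε hε
      obtain ⟨N, hN⟩ := hcg (c * ε) (by positivity)
      refine ⟨N, fun m hm n hn => ?_⟩
      have h1 := hN m hm n hn
      rw [dist_eq_norm] at h1 ⊢
      have h2 := hlow (x m - x n)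
      rw [A.map_sub, hx m, hx n] at h2
      nlinarith [norm_nonneg (x m - x n)]
    obtain ⟨p, hp⟩ := cauchySeq_tendsto_of_complete hcau
    have h3 : Tendsto (fun n => A (x n)) atTop (𝓝 (A p)) := (hcont.tendsto p).comp hp
    have h4 : (fun n => A (x n)) = g := funext hx
    rw [h4] at h3
    exact ⟨p, tendsto_nhds_unique h3 hgy⟩
  haveI : CompleteSpace (LinearMap.range A) := hclosed.completeSpace_coe
  have htop : LinearMap.range A = ⊤ := by
    rw [← Submodule.orthogonal_eq_bot_iff, Submodule.eq_bot_iff]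
    intro z hz
    have h1 : ⟪A z, z⟫_ℂ = 0 :=
      (Submodule.mem_orthogonal _ z).mp hz (A z) (LinearMap.mem_range_self A z)
    have h2 := hcoer z
    rw [h1, Complex.zero_re] at h2
    have h3 : ‖z‖ ^ 2 = 0 := le_antisymm (by nlinarith) (sq_nonneg _)
    have h4 : ‖z‖ = 0 := by
      nlinarith [norm_nonneg z, sq_abs ‖z‖, abs_norm z, sq_nonneg (‖z‖)]
    exact norm_eq_zero.mp h4
  intro y
  have hy : y ∈ LinearMap.range A := htop ▸ Submodule.mem_top
  exact hy


lemma proj_norm_le {K : Submodule ℂ H} [K.HasOrthogonalProjection] (z : H) :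
    ‖(Submodule.orthogonalProjection K z : ↥K)‖ ≤ ‖z‖ := by
  calc ‖(Submodule.orthogonalProjection K z : ↥K)‖ ≤ ‖Submodule.orthogonalProjection K‖ * ‖z‖ :=
      (Submodule.orthogonalProjection K).le_opNorm z
    _ ≤ 1 * ‖z‖ := by
      have := Submodule.orthogonalProjection_norm_le K
      exact mul_le_mul_of_nonneg_right this (norm_nonneg z)
    _ = ‖z‖ := one_mul _

lemma phi_proj_surj (hF : IsFriedrichsPair T0 T0t lam mu)
    (hW : T0t.adjoint.domain = T0.adjoint.domain) (K : Submodule ℂ H)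
    (hKc : IsClosed (K : Set H)) (hKW : ∀ x, x ∈ K → x ∈ T0t.adjoint.domain) :
    ∀ y, y ∈ K → ∃ x, ∃ hx : x ∈ K, PhiW hW ⟨x, hKW x hx⟩ - y ∈ Kᗮ := by
  haveI : CompleteSpace K := hKc.completeSpace_coe
  let A : ↥K →ₗ[ℂ] ↥K :=
    { toFun := fun k => Submodule.orthogonalProjection K (PhiW hW ⟨(k : H), hKW _ k.2⟩)
      map_add' := by
        intro k l
        have h1 : (⟨((k + l : ↥K) : H), hKW _ (k + l).2⟩ : ↥T0t.adjoint.domain)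
            = ⟨(k : H), hKW _ k.2⟩ + ⟨(l : H), hKW _ l.2⟩ := Subtype.ext rfl
        simp only [h1, PhiW_add]
        exact (Submodule.orthogonalProjection K).map_add _ _
      map_smul' := by
        intro c k
        have h1 : (⟨((c • k : ↥K) : H), hKW _ (c • k).2⟩ : ↥T0t.adjoint.domain)
            = c • ⟨(k : H), hKW _ k.2⟩ := Subtype.ext rfl
        simp only [h1, PhiW_smul, RingHom.id_apply]
        exact (Submodule.orthogonalProjection K).map_smul c _ }
  have hAdef : ∀ k : ↥K, A k = Submodule.orthogonalProjection K (PhiW hW ⟨(k : H), hKW _ k.2⟩) :=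
    fun _ => rfl
  have hbound : ∀ k : ↥K, ‖A k‖ ≤ 2 * lam * ‖k‖ := by
    intro k
    rw [hAdef]
    calc ‖(Submodule.orthogonalProjection K (PhiW hW ⟨(k : H), hKW _ k.2⟩) : ↥K)‖
        ≤ ‖PhiW hW ⟨(k : H), hKW _ k.2⟩‖ := proj_norm_le _
      _ ≤ 2 * lam * ‖(k : H)‖ := PhiW_norm_le hF.toIsDualPairT12 hW _
  have hcoer : ∀ k : ↥K, (2 * mu) * ‖k‖ ^ 2 ≤ (⟪A k, k⟫_ℂ).re := by
    intro k
    rw [hAdef]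
    have h1 : ⟪(A k : ↥K), k⟫_ℂ = ⟪PhiW hW ⟨(k : H), hKW _ k.2⟩, (k : H)⟫_ℂ := by
      rw [hAdef, Submodule.coe_inner]
      have h2 := Submodule.starProjection_inner_eq_zero (K := K)
        (PhiW hW ⟨(k : H), hKW _ k.2⟩) (k : H) k.2
      rw [inner_sub_left, sub_eq_zero] at h2
      exact h2.symm
    rw [← hAdef, h1]
    have h5 := PhiW_coercive hF hW (⟨(k : H), hKW _ k.2⟩ : ↥T0t.adjoint.domain)
    have h6 : ‖((⟨(k : H), hKW _ k.2⟩ : ↥T0t.adjoint.domain) : H)‖ = ‖k‖ := rfl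
    rw [h6] at h5
    exact h5
  have hsurj : Function.Surjective A :=
    surj_of_coercive A (2 * lam) hbound (mul_pos two_pos hF.mu_pos) hcoer
  intro y hy
  obtain ⟨k, hk⟩ := hsurj ⟨y, hy⟩
  refine ⟨(k : H), k.2, ?_⟩
  have h3 : ((Submodule.orthogonalProjection K (PhiW hW ⟨(k : H), hKW _ k.2⟩) : ↥K) : H) = y := by
    rw [← hAdef, hk]
  have h4 : PhiW hW ⟨(k : H), hKW _ k.2⟩
      - ((Submodule.orthogonalProjection K (PhiW hW ⟨(k : H), hKW _ k.2⟩) : ↥K) : H) ∈ Kᗮ :=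
    Submodule.sub_starProjection_mem_orthogonal (K := K) (PhiW hW ⟨(k : H), hKW _ k.2⟩)
  rwa [h3] at h4

lemma grand_decomp (hF : IsFriedrichsPair T0 T0t lam mu)
    (hW : T0t.adjoint.domain = T0.adjoint.domain) (u : ↥T0t.adjoint.domain) :
    ∃ u0 k kt : ↥T0t.adjoint.domain,
      (∀ w, bform T0 T0t hW u0 w = 0) ∧ T0t.adjoint k = 0 ∧ Tt1 hW kt = 0 ∧
        u = u0 + k + kt := by
  have hRc : IsClosed ((ranR T0 T0t hW : Submodule ℂ H) : Set H) := ranR_closed hF hW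
  haveI : CompleteSpace (ranR T0 T0t hW) := hRc.completeSpace_coe
  set g := T0t.adjoint u with hg
  set a1 := ((Submodule.orthogonalProjection (ranR T0 T0t hW) g : ↥(ranR T0 T0t hW)) : H) with ha1
  have ha1mem : a1 ∈ ranR T0 T0t hW := (Submodule.orthogonalProjection (ranR T0 T0t hW) g).2
  obtain ⟨xa, hxa, hkera, hvala⟩ := ha1mem
  have hk1 : g - a1 ∈ (ranR T0 T0t hW)ᗮ := Submodule.sub_starProjection_mem_orthogonal g
  have hk1K2 : g - a1 ∈ kerAdj T0 := ranR_perp_subset hF.toIsDualPairT12 hW hk1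
  have hK2c : IsClosed ((kerAdj T0 : Submodule ℂ H) : Set H) := kerAdj_closed hF.dense'
  have hK2W : ∀ x, x ∈ kerAdj T0 → x ∈ T0t.adjoint.domain := by
    intro x hx
    have h1 : x ∈ T0.adjoint.domain := hx.choose
    rw [hW]
    exact h1
  obtain ⟨kt0, hkt0K, hktperp⟩ := phi_proj_surj hF hW (kerAdj T0) hK2c hK2W (g - a1) hk1K2
  have hsub : (kerAdj T0)ᗮ ≤ ranR T0 T0t hW := by
    have h1 : (ranR T0 T0t hW)ᗮ ≤ kerAdj T0 :=
      fun x hx => ranR_perp_subset hF.toIsDualPairT12 hW hx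
    have h2 := Submodule.orthogonal_le h1
    rwa [Submodule.orthogonal_orthogonal] at h2
  have hrR : PhiW hW ⟨kt0, hK2W kt0 hkt0K⟩ - (g - a1) ∈ ranR T0 T0t hW := hsub hktperp
  obtain ⟨xc, hxc, hkerc, hvalc⟩ := hrR
  have hTt1kt : Tt1 hW (⟨kt0, hK2W kt0 hkt0K⟩ : ↥T0t.adjoint.domain) = 0 := hkt0K.choose_spec
  have hTkt : T0t.adjoint (⟨kt0, hK2W kt0 hkt0K⟩ : ↥T0t.adjoint.domain)
      = PhiW hW ⟨kt0, hK2W kt0 hkt0K⟩ := by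
    unfold PhiW
    rw [hTt1kt, add_zero]
  refine ⟨⟨xa, hxa⟩ - ⟨xc, hxc⟩,
    u - ⟨xa, hxa⟩ + ⟨xc, hxc⟩ - ⟨kt0, hK2W kt0 hkt0K⟩,
    ⟨kt0, hK2W kt0 hkt0K⟩, fun w => ?_, ?_, hTt1kt, ?_⟩
  · rw [bform_sub_left, hkera w, hkerc w, sub_zero]
  · rw [T0t.adjoint.map_sub, T0t.adjoint.map_add, T0t.adjoint.map_sub, hTkt, hvala, hvalc,
      ← hg]
    abel
  · abel


/-! #### Helpers for the Krein-space double-orthocomplement argument -/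

lemma m_sub_left (M : MOp T0t) (u v w : ↥T0t.adjoint.domain) :
    M.m (u - v) w = M.m u w - M.m v w := by
  have h := M.add_left (u - v) v w
  rw [sub_add_cancel] at h
  linear_combination -h

lemma m_zero_left (M : MOp T0t) (w : ↥T0t.adjoint.domain) : M.m 0 w = 0 := by
  have h := M.add_left 0 0 w
  rw [add_zero] at h
  linear_combination -h

lemma V_add_mem (hW : T0t.adjoint.domain = T0.adjoint.domain) (M : MOp T0t)
    {u v : ↥T0t.adjoint.domain} (hu : u ∈ kerDsubM T0 T0t hW M.m)
    (hv : v ∈ kerDsubM T0 T0t hW M.m) : u + v ∈ kerDsubM T0 T0t hW M.m := by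
  intro w
  rw [bform_add_left, M.add_left, hu w, hv w]

lemma V_sub_mem (hW : T0t.adjoint.domain = T0.adjoint.domain) (M : MOp T0t)
    {u v : ↥T0t.adjoint.domain} (hu : u ∈ kerDsubM T0 T0t hW M.m)
    (hv : v ∈ kerDsubM T0 T0t hW M.m) : u - v ∈ kerDsubM T0 T0t hW M.m := by
  intro w
  rw [bform_sub_left, m_sub_left, hu w, hv w]

lemma V_smul_mem (hW : T0t.adjoint.domain = T0.adjoint.domain) (M : MOp T0t)
    {u : ↥T0t.adjoint.domain} (c : ℂ) (hu : u ∈ kerDsubM T0 T0t hW M.m) :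
    c • u ∈ kerDsubM T0 T0t hW M.m := by
  intro w
  rw [bform_smul_left, M.smul_left, hu w]

lemma V_zero_mem (hW : T0t.adjoint.domain = T0.adjoint.domain) (M : MOp T0t) :
    (0 : ↥T0t.adjoint.domain) ∈ kerDsubM T0 T0t hW M.m := by
  intro w
  rw [bform_zero_left, m_zero_left]

/-- V is closed under graph limits. -/
lemma V_graph_closed (hW : T0t.adjoint.domain = T0.adjoint.domain) (M : MOp T0t)
    {f : ℕ → ↥T0t.adjoint.domain} {u : ↥T0t.adjoint.domain}
    (hmem : ∀ n, f n ∈ kerDsubM T0 T0t hW M.m)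
    (h1 : Tendsto (fun n => ((f n : H))) atTop (𝓝 (u : H)))
    (h2 : Tendsto (fun n => T0t.adjoint (f n)) atTop (𝓝 (T0t.adjoint u))) :
    u ∈ kerDsubM T0 T0t hW M.m := by
  intro v
  obtain ⟨C, hC⟩ := M.bounded
  have hgn : Tendsto (fun n => gnorm T0t (f n - u)) atTop (𝓝 0) := by
    have ha : Tendsto (fun n => ‖((f n : H)) - (u : H)‖) atTop (𝓝 0) := by
      have := (h1.sub (tendsto_const_nhds (x := (u : H)))).norm
      simpa using this
    have hb : Tendsto (fun n => ‖T0t.adjoint (f n) - T0t.adjoint u‖) atTop (𝓝 0) := by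
      have := (h2.sub (tendsto_const_nhds (x := T0t.adjoint u))).norm
      simpa using this
    have heq : (fun n => gnorm T0t (f n - u))
        = fun n => ‖((f n : H)) - (u : H)‖ + ‖T0t.adjoint (f n) - T0t.adjoint u‖ := by
      funext n
      unfold gnorm
      rw [Submodule.coe_sub, T0t.adjoint.map_sub]
    rw [heq]
    simpa using ha.add hb
  have hmlim : Tendsto (fun n => M.m (f n) v) atTop (𝓝 (M.m u v)) := by
    rw [tendsto_iff_norm_sub_tendsto_zero]
    have hb : ∀ n, ‖M.m (f n) v - M.m u v‖ ≤ C * (gnorm T0t (f n - u) * gnorm T0t v) := by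
      intro n
      have h3 : M.m (f n) v - M.m u v = M.m (f n - u) v := (m_sub_left M _ _ _).symm
      rw [h3]
      exact hC _ v
    have h4 : Tendsto (fun n => C * (gnorm T0t (f n - u) * gnorm T0t v)) atTop
        (𝓝 (C * (0 * gnorm T0t v))) := (hgn.mul tendsto_const_nhds).const_mul C
    have h5 : Tendsto (fun n => C * (gnorm T0t (f n - u) * gnorm T0t v)) atTop (𝓝 0) := by
      simpa using h4
    exact squeeze_zero (fun n => norm_nonneg _) hb h5
  have hblim : Tendsto (fun n => bform T0 T0t hW (f n) v) atTop
      (𝓝 (bform T0 T0t hW u v)) := by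
    simp only [bform_def]
    exact (tendsto_const_nhds.inner h2).sub (tendsto_const_nhds.inner h1)
  have heq : (fun n => bform T0 T0t hW (f n) v) = fun n => M.m (f n) v :=
    funext fun n => hmem n v
  rw [heq] at hblim
  exact tendsto_nhds_unique hblim hmlim


lemma PhiW_sub (hW : T0t.adjoint.domain = T0.adjoint.domain) (u v : ↥T0t.adjoint.domain) :
    PhiW hW (u - v) = PhiW hW u - PhiW hW v := by
  unfold PhiW
  rw [T0t.adjoint.map_sub, Tt1_sub]
  abel

lemma proj_absorb_right {K : Submodule ℂ H} [K.HasOrthogonalProjection] (z : H) {k : H}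
    (hk : k ∈ K) :
    ⟪k, ((Submodule.orthogonalProjection K z : ↥K) : H)⟫_ℂ = ⟪k, z⟫_ℂ := by
  have h : ⟪z - ((Submodule.orthogonalProjection K z : ↥K) : H), k⟫_ℂ = 0 :=
    Submodule.starProjection_inner_eq_zero z k hk
  rw [inner_sub_left, sub_eq_zero] at h
  calc ⟪k, ((Submodule.orthogonalProjection K z : ↥K) : H)⟫_ℂ
      = starRingEnd ℂ ⟪((Submodule.orthogonalProjection K z : ↥K) : H), k⟫_ℂ := (inner_conj_symm _ _).symm
    _ = starRingEnd ℂ ⟪z, k⟫_ℂ := by rw [← h]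
    _ = ⟪k, z⟫_ℂ := inner_conj_symm _ _

set_option maxHeartbeats 1000000 in
set_option synthInstance.maxHeartbeats 400000 in
/-- The crucial double-orthocomplement identity `(V^[⊥])^[⊥] ⊆ V`. -/
lemma iorth_iorth_subset (hF : IsFriedrichsPair T0 T0t lam mu)
    (hW : T0t.adjoint.domain = T0.adjoint.domain) (M : MOp T0t) (hM : MBC T0 T0t hW M.m) :
    iorth T0 T0t hW (iorth T0 T0t hW (kerDsubM T0 T0t hW M.m))
      ⊆ kerDsubM T0 T0t hW M.m := by
  classical
  have hFd := hF.toIsDualPairT12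
  intro u hu
  have hK1c : IsClosed ((kerAdj T0t : Submodule ℂ H) : Set H) := kerAdj_closed (dense_t hFd)
  have hK2c : IsClosed ((kerAdj T0 : Submodule ℂ H) : Set H) := kerAdj_closed hFd.dense'
  haveI : CompleteSpace ↥(kerAdj T0t) := hK1c.completeSpace_coe
  haveI : CompleteSpace ↥(kerAdj T0) := hK2c.completeSpace_coe
  have hK1W : ∀ x, x ∈ kerAdj T0t → x ∈ T0t.adjoint.domain := fun x hx => hx.choose
  have hK2W : ∀ x, x ∈ kerAdj T0 → x ∈ T0t.adjoint.domain := by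
    intro x hx
    rw [hW]
    exact hx.choose
  set e1 : ↥(kerAdj T0t) → ↥T0t.adjoint.domain := fun k => ⟨(k : H), hK1W _ k.2⟩ with he1
  set e2 : ↥(kerAdj T0) → ↥T0t.adjoint.domain := fun k => ⟨(k : H), hK2W _ k.2⟩ with he2
  have he1T : ∀ k, T0t.adjoint (e1 k) = 0 := fun k => k.2.choose_spec
  have he2T : ∀ k, Tt1 hW (e2 k) = 0 := fun k => k.2.choose_spec
  have he1Tt : ∀ k, Tt1 hW (e1 k) = PhiW hW (e1 k) := by
    intro k
    have : PhiW hW (e1 k) = T0t.adjoint (e1 k) + Tt1 hW (e1 k) := rfl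
    rw [this, he1T, zero_add]
  have he2T1 : ∀ k, T0t.adjoint (e2 k) = PhiW hW (e2 k) := by
    intro k
    have : PhiW hW (e2 k) = T0t.adjoint (e2 k) + Tt1 hW (e2 k) := rfl
    rw [this, he2T, add_zero]
  set emb : WithLp 2 (↥(kerAdj T0t) × ↥(kerAdj T0)) → ↥T0t.adjoint.domain :=
    fun p => e1 p.fst + e2 p.snd with hemb
  have hembadd : ∀ p q, emb (p + q) = emb p + emb q := by
    intro p q
    apply Subtype.ext
    show ((p + q).fst : H) + ((p + q).snd : H) = ((e1 p.fst + e2 p.snd : ↥T0t.adjoint.domain) : H)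
      + ((e1 q.fst + e2 q.snd : ↥T0t.adjoint.domain) : H)
    rw [WithLp.add_fst, WithLp.add_snd]
    show ((p.fst : H) + (q.fst : H)) + ((p.snd : H) + (q.snd : H))
      = ((p.fst : H) + (p.snd : H)) + ((q.fst : H) + (q.snd : H))
    abel
  have hembzero : emb 0 = 0 := by
    apply Subtype.ext
    show ((0 : WithLp 2 (↥(kerAdj T0t) × ↥(kerAdj T0))).fst : H)
      + ((0 : WithLp 2 (↥(kerAdj T0t) × ↥(kerAdj T0))).snd : H) = (0 : H)
    rw [WithLp.zero_fst, WithLp.zero_snd]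
    simp
  have hembsmul : ∀ (c : ℂ) p, emb (c • p) = c • emb p := by
    intro c p
    apply Subtype.ext
    show ((c • p).fst : H) + ((c • p).snd : H) = c • ((p.fst : H) + (p.snd : H))
    rw [WithLp.smul_fst, WithLp.smul_snd]
    show c • (p.fst : H) + c • (p.snd : H) = _
    rw [smul_add]
  set X : Submodule ℂ (WithLp 2 (↥(kerAdj T0t) × ↥(kerAdj T0))) :=
    { carrier := {p | emb p ∈ kerDsubM T0 T0t hW M.m}
      add_mem' := by
        intro p q hp hq
        show emb (p + q) ∈ kerDsubM T0 T0t hW M.m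
        rw [hembadd]
        exact V_add_mem hW M hp hq
      zero_mem' := by
        show emb 0 ∈ kerDsubM T0 T0t hW M.m
        rw [hembzero]
        exact V_zero_mem hW M
      smul_mem' := by
        intro c p hp
        show emb (c • p) ∈ kerDsubM T0 T0t hW M.m
        rw [hembsmul]
        exact V_smul_mem hW M c hp } with hX
  have hXmem : ∀ p, p ∈ X ↔ emb p ∈ kerDsubM T0 T0t hW M.m := fun p => Iff.rfl
  -- continuity of coordinates
  have hc1 : Continuous (fun q : WithLp 2 (↥(kerAdj T0t) × ↥(kerAdj T0)) => ((q.fst : H))) := by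
    exact continuous_subtype_val.comp (continuous_fst.comp (WithLp.prod_continuous_ofLp 2 ↥(kerAdj T0t) ↥(kerAdj T0)))
  have hc2 : Continuous (fun q : WithLp 2 (↥(kerAdj T0t) × ↥(kerAdj T0)) => ((q.snd : H))) := by
    exact continuous_subtype_val.comp (continuous_snd.comp (WithLp.prod_continuous_ofLp 2 ↥(kerAdj T0t) ↥(kerAdj T0)))
  have hembco : ∀ q, ((emb q : ↥T0t.adjoint.domain) : H) = (q.fst : H) + (q.snd : H) :=
    fun q => rfl
  have hembT1 : ∀ q, T0t.adjoint (emb q) = PhiW hW (e2 q.snd) := by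
    intro q
    show T0t.adjoint (e1 q.fst + e2 q.snd) = _
    rw [T0t.adjoint.map_add, he1T, he2T1, zero_add]
  have hXc : IsClosed (X : Set (WithLp 2 (↥(kerAdj T0t) × ↥(kerAdj T0)))) := by
    apply IsSeqClosed.isClosed
    intro f p hf hfp
    have h1 : Tendsto (fun n => ((emb (f n) : ↥T0t.adjoint.domain) : H)) atTop
        (𝓝 ((emb p : ↥T0t.adjoint.domain) : H)) := by
      simp only [hembco]
      exact ((hc1.tendsto p).comp hfp).add ((hc2.tendsto p).comp hfp)
    have hsnd : Tendsto (fun n => (((f n).snd : H))) atTop (𝓝 ((p.snd : H))) :=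
      (hc2.tendsto p).comp hfp
    have h2 : Tendsto (fun n => T0t.adjoint (emb (f n))) atTop
        (𝓝 (T0t.adjoint (emb p))) := by
      simp only [hembT1]
      rw [tendsto_iff_norm_sub_tendsto_zero]
      have hb : ∀ n, ‖PhiW hW (e2 (f n).snd) - PhiW hW (e2 p.snd)‖
          ≤ 2 * lam * ‖(((f n).snd : H)) - ((p.snd : H))‖ := by
        intro n
        rw [← PhiW_sub]
        have h3 := PhiW_norm_le hFd hW (e2 (f n).snd - e2 p.snd)
        have h4 : ((e2 (f n).snd - e2 p.snd : ↥T0t.adjoint.domain) : H)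
            = (((f n).snd : H)) - ((p.snd : H)) := rfl
        rwa [h4] at h3
      have h5 : Tendsto (fun n => 2 * lam * ‖(((f n).snd : H)) - ((p.snd : H))‖) atTop
          (𝓝 (2 * lam * ‖((p.snd : H)) - ((p.snd : H))‖)) :=
        ((hsnd.sub tendsto_const_nhds).norm).const_mul _
      have h6 : Tendsto (fun n => 2 * lam * ‖(((f n).snd : H)) - ((p.snd : H))‖) atTop
          (𝓝 0) := by simpa using h5
      exact squeeze_zero (fun n => norm_nonneg _) hb h6
    exact V_graph_closed hW M hf h1 h2
  haveI : CompleteSpace ↥X := hXc.completeSpace_coe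
  -- the representing operator A
  set A : WithLp 2 (↥(kerAdj T0t) × ↥(kerAdj T0)) → WithLp 2 (↥(kerAdj T0t) × ↥(kerAdj T0)) :=
    fun q => (WithLp.equiv 2 _).symm
      (Submodule.orthogonalProjection (kerAdj T0t) (-(PhiW hW (e1 q.fst))),
       Submodule.orthogonalProjection (kerAdj T0) (PhiW hW (e2 q.snd))) with hA
  have hAfst : ∀ q, (A q).fst = Submodule.orthogonalProjection (kerAdj T0t) (-(PhiW hW (e1 q.fst))) :=
    fun q => rfl
  have hAsnd : ∀ q, (A q).snd = Submodule.orthogonalProjection (kerAdj T0) (PhiW hW (e2 q.snd)) :=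
    fun q => rfl
  have hBrep : ∀ x y, bform T0 T0t hW (emb x) (emb y) = ⟪y, A x⟫_ℂ := by
    intro x y
    have hexp : bform T0 T0t hW (emb x) (emb y)
        = bform T0 T0t hW (e1 x.fst) (e1 y.fst) + bform T0 T0t hW (e1 x.fst) (e2 y.snd)
          + (bform T0 T0t hW (e2 x.snd) (e1 y.fst) + bform T0 T0t hW (e2 x.snd) (e2 y.snd)) := by
      show bform T0 T0t hW (e1 x.fst + e2 x.snd) (e1 y.fst + e2 y.snd) = _
      rw [bform_add_left, bform_add_right, bform_add_right]
    have t11 : bform T0 T0t hW (e1 x.fst) (e1 y.fst)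
        = ⟪((y.fst : H)), -(PhiW hW (e1 x.fst))⟫_ℂ := by
      rw [bform_def, he1T, inner_zero_right, he1Tt, inner_neg_right]
      rw [PhiW_symm hFd hW (e1 y.fst) (e1 x.fst)]
      ring
    have t12 : bform T0 T0t hW (e1 x.fst) (e2 y.snd) = 0 := by
      rw [bform_def, he1T, he2T, inner_zero_right, inner_zero_left, sub_zero]
    have t21 : bform T0 T0t hW (e2 x.snd) (e1 y.fst) = 0 := by
      rw [bform_def, he2T1, he1Tt]
      rw [PhiW_symm hFd hW (e1 y.fst) (e2 x.snd)]
      exact sub_self _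
    have t22 : bform T0 T0t hW (e2 x.snd) (e2 y.snd)
        = ⟪((y.snd : H)), PhiW hW (e2 x.snd)⟫_ℂ := by
      rw [bform_def, he2T1, he2T, inner_zero_left, sub_zero]
    have hiprod : ⟪y, A x⟫_ℂ = ⟪y.fst, (A x).fst⟫_ℂ + ⟪y.snd, (A x).snd⟫_ℂ :=
      WithLp.prod_inner_apply y (A x)
    rw [hexp, t11, t12, t21, t22, hiprod, hAfst, hAsnd, Submodule.coe_inner,
      Submodule.coe_inner, proj_absorb_right _ y.fst.2, proj_absorb_right _ y.snd.2]
    ring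
  have hAsym : ∀ x y, ⟪A x, y⟫_ℂ = ⟪x, A y⟫_ℂ := by
    intro x y
    calc ⟪A x, y⟫_ℂ = starRingEnd ℂ ⟪y, A x⟫_ℂ := (inner_conj_symm _ _).symm
      _ = starRingEnd ℂ (bform T0 T0t hW (emb x) (emb y)) := by rw [hBrep]
      _ = bform T0 T0t hW (emb y) (emb x) := (bform_herm hFd hW _ _).symm
      _ = ⟪x, A y⟫_ℂ := hBrep y x
  have hAsurj : ∀ q, ∃ x, A x = q := by
    intro q
    obtain ⟨k1, hk1, hperp1⟩ := phi_proj_surj hF hW (kerAdj T0t) hK1c hK1W (-(q.fst : H))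
      (Submodule.neg_mem _ q.fst.2)
    obtain ⟨k2, hk2, hperp2⟩ := phi_proj_surj hF hW (kerAdj T0) hK2c hK2W ((q.snd : H))
      q.snd.2
    refine ⟨(WithLp.equiv 2 _).symm (⟨k1, hk1⟩, ⟨k2, hk2⟩), ?_⟩
    refine (WithLp.equiv 2 _).injective (Prod.ext ?_ ?_)
    · apply Subtype.ext
      show ((Submodule.orthogonalProjection (kerAdj T0t)
        (-(PhiW hW (e1 ⟨k1, hk1⟩))) : ↥(kerAdj T0t)) : H) = ((q.fst : H))
      refine Submodule.eq_starProjection_of_mem_orthogonal (u := -(PhiW hW (e1 ⟨k1, hk1⟩))) q.fst.2 ?_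
      have h1 : -(PhiW hW (e1 ⟨k1, hk1⟩)) - (q.fst : H)
          = -(PhiW hW (⟨k1, hK1W k1 hk1⟩ : ↥T0t.adjoint.domain) - (-(q.fst : H))) := by
        show -(PhiW hW (⟨k1, hK1W k1 hk1⟩ : ↥T0t.adjoint.domain)) - (q.fst : H) = _
        abel
      rw [h1]
      exact Submodule.neg_mem _ hperp1
    · apply Subtype.ext
      show ((Submodule.orthogonalProjection (kerAdj T0)
        (PhiW hW (e2 ⟨k2, hk2⟩)) : ↥(kerAdj T0)) : H) = ((q.snd : H))
      refine Submodule.eq_starProjection_of_mem_orthogonal (u := PhiW hW (e2 ⟨k2, hk2⟩)) q.snd.2 ?_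
      exact hperp2
  -- decompose u
  obtain ⟨u0, ku, ktu, hu0, hkuT, hktuT, hudec⟩ := grand_decomp hF hW u
  set xu : WithLp 2 (↥(kerAdj T0t) × ↥(kerAdj T0)) :=
    (WithLp.equiv 2 _).symm (⟨(ku : H), ⟨ku.2, hkuT⟩⟩, ⟨(ktu : H), ⟨hW.le ktu.2, hktuT⟩⟩)
    with hxu
  have hembxu : emb xu = ku + ktu := Subtype.ext rfl
  have hclaim1 : ∀ x' ∈ Xᗮ, ⟪x', xu⟫_ℂ = 0 := by
    intro x' hx'
    obtain ⟨a, ha⟩ := hAsurj x'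
    have hasum : emb a ∈ iorth T0 T0t hW (kerDsubM T0 T0t hW M.m) := by
      intro v hv
      obtain ⟨v0, kv, ktv, hv0, hkvT, hktvT, hvdec⟩ := grand_decomp hF hW v
      set xv : WithLp 2 (↥(kerAdj T0t) × ↥(kerAdj T0)) :=
        (WithLp.equiv 2 _).symm (⟨(kv : H), ⟨kv.2, hkvT⟩⟩, ⟨(ktv : H), ⟨hW.le ktv.2, hktvT⟩⟩)
        with hxv
      have hembxv : emb xv = kv + ktv := Subtype.ext rfl
      have hxvX : xv ∈ X := by
        rw [hXmem, hembxv]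
        have h7 : kv + ktv = v - v0 := by rw [hvdec]; abel
        rw [h7]
        exact V_sub_mem hW M hv (kerD_subset_V hFd hW M hM hv0)
      have hz1 : bform T0 T0t hW (emb a) v0 = 0 := by
        rw [bform_herm hFd hW, hv0 (emb a), _root_.map_zero]
      have hveq : v = v0 + (kv + ktv) := by rw [hvdec]; abel
      rw [hveq, bform_add_right, ← hembxv, hz1, hBrep a xv, ha, zero_add]
      exact (Submodule.mem_orthogonal X x').mp hx' xv hxvX
    have humem : bform T0 T0t hW (emb xu) (emb a) = 0 := by
      have h1 : bform T0 T0t hW u (emb a) = 0 := hu (emb a) hasum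
      have h2 : bform T0 T0t hW u0 (emb a) = 0 := hu0 (emb a)
      have h3 : emb xu = u - u0 := by rw [hembxu, hudec]; abel
      rw [h3, bform_sub_left, h1, h2, sub_zero]
    calc ⟪x', xu⟫_ℂ = ⟪A a, xu⟫_ℂ := by rw [ha]
      _ = ⟪a, A xu⟫_ℂ := hAsym a xu
      _ = 0 := by rw [← hBrep]; exact humem
  have hxuX : xu ∈ X := by
    have hxu2 : xu ∈ Xᗮᗮ := by
      rw [Submodule.mem_orthogonal]
      intro z hz
      exact hclaim1 z hz
    rwa [Submodule.orthogonal_orthogonal] at hxu2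
  rw [hXmem, hembxu] at hxuX
  have hfin : u = u0 + (ku + ktu) := by rw [hudec]; abel
  rw [hfin]
  exact V_add_mem hW M (kerD_subset_V hFd hW M hM hu0) hxuX

end FriedWork

/-- Theorem 2.7(a): if `M` satisfies the (M)-boundary conditions, then
`V := ker (D − M)` satisfies the (V)-boundary conditions and
`V^[⊥] = ker (D + M*)`. -/
theorem MBC_implies_VBC
    (T0 T0t : H →ₗ.[ℂ] H) (lam mu : ℝ) (hF : IsFriedrichsPair T0 T0t lam mu)
    (hW : T0t.adjoint.domain = T0.adjoint.domain)
    (M : MOp T0t) (hM : MBC T0 T0t hW M.m) :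
    VBC T0 T0t hW (kerDsubM T0 T0t hW M.m) ∧
    iorth T0 T0t hW (kerDsubM T0 T0t hW M.m) =
      {u : ↥T0t.adjoint.domain | ∀ v, bform T0 T0t hW u v + starRingEnd ℂ (M.m v u) = 0} := by
  have hFd := hF.toIsDualPairT12
  constructor
  · exact ⟨V_subset_Wplus hW M hM, iorthV_subset_Wminus hFd hW M hM,
      Set.Subset.antisymm (V_subset_iorth_iorth hFd hW _) (iorth_iorth_subset hF hW M hM)⟩
  · exact iorth_V_eq hFd hW M hM
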